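/- Let P₁, P₂ : [0, T] → ℝ be continuous functions with P₁, P₂ ≥ 0, and let x : [0, T] → ℝ be differentiable with x(0) > 0 and x'(t) = −x(t)·P₁(t) + P₂(t) for all t. Then x(t) > 0 for all t ∈ [0, T]. -/

import Mathlib

theorem stmt_13 (T : ℝ) (P1 P2 x : ℝ → ℝ)
    (hP1c : ContinuousOn P1 (Set.Icc 0 T)) (hP2c : ContinuousOn P2 (Set.Icc 0 T))
    (hP1 : ∀ t ∈ Set.Icc 0 T, 0 ≤ P1 t) (hP2 : ∀ t ∈ Set.Icc 0 T, 0 ≤ P2 t)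
    (hx0 : 0 < x 0)
    (hx : ∀ t ∈ Set.Icc 0 T, HasDerivAt x (-(x t) * P1 t + P2 t) t) :
    ∀ t ∈ Set.Icc 0 T, 0 < x t := by
  intro t ht
  obtain ⟨ht0, htT⟩ := ht
  have hT : (0:ℝ) ≤ T := le_trans ht0 htT
  have h0T : (0:ℝ) ∈ Set.Icc (0:ℝ) T := ⟨le_rfl, hT⟩
  set Q : ℝ → ℝ := fun u => ∫ s in (0:ℝ)..u, P1 s with hQdef
  have hP1intT : IntervalIntegrable P1 MeasureTheory.volume 0 T :=
    (hP1c.mono (by rw [Set.uIcc_of_le hT])).intervalIntegrable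
  have hP1int : ∀ u ∈ Set.Icc (0:ℝ) T, IntervalIntegrable P1 MeasureTheory.volume 0 u := by
    intro u hu
    exact ((hP1c.mono (by rw [Set.uIcc_of_le hu.1]; exact Set.Icc_subset_Icc le_rfl hu.2))).intervalIntegrable
  have hQc : ContinuousOn Q (Set.Icc 0 T) := by
    have := intervalIntegral.continuousOn_primitive_interval'
      (μ := MeasureTheory.volume) hP1intT (a := 0) (by rw [Set.uIcc_of_le hT]; exact h0T)
    rwa [Set.uIcc_of_le hT] at this
  have hxc : ContinuousOn x (Set.Icc 0 T) := fun u hu =>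
    (hx u hu).continuousAt.continuousWithinAt
  set y : ℝ → ℝ := fun u => x u * Real.exp (Q u) with hydef
  have hyc : ContinuousOn y (Set.Icc 0 T) :=
    hxc.mul (Real.continuous_exp.comp_continuousOn hQc)
  have hyderiv : ∀ u ∈ Set.Ioo (0:ℝ) T, HasDerivAt y (P2 u * Real.exp (Q u)) u := by
    intro u hu
    have huI : u ∈ Set.Icc (0:ℝ) T := Set.Ioo_subset_Icc_self hu
    have hmem : Set.Icc (0:ℝ) T ∈ nhds u := Icc_mem_nhds hu.1 hu.2
    have hQd : HasDerivAt Q (P1 u) u := by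
      refine intervalIntegral.integral_hasDerivAt_right (hP1int u huI)
        ⟨Set.Icc 0 T, hmem, hP1c.aestronglyMeasurable measurableSet_Icc⟩ ?_
      exact (hP1c u huI).continuousAt hmem
    have : HasDerivAt (fun v => x v * Real.exp (Q v))
        ((-(x u) * P1 u + P2 u) * Real.exp (Q u) + x u * (Real.exp (Q u) * P1 u)) u :=
      (hx u huI).fun_mul hQd.exp
    convert this using 1
    ring
  have hmono : MonotoneOn y (Set.Icc 0 T) := by
    apply monotoneOn_of_deriv_nonneg (convex_Icc 0 T) hyc
    · intro u hu
      rw [interior_Icc] at hu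
      exact ((hyderiv u hu).differentiableAt).differentiableWithinAt
    · intro u hu
      rw [interior_Icc] at hu
      rw [(hyderiv u hu).deriv]
      exact mul_nonneg (hP2 u (Set.Ioo_subset_Icc_self hu)) (Real.exp_pos _).le
  have hy0 : y 0 = x 0 := by simp [hydef, hQdef]
  have hle : y 0 ≤ y t := hmono h0T ⟨ht0, htT⟩ ht0
  rw [hy0] at hle
  have hyt : 0 < x t * Real.exp (Q t) := lt_of_lt_of_le hx0 hle
  have hexp := Real.exp_pos (Q t)
  nlinarith
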